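/- Assume 0 < d_min, ρ_0 := γ/φ(d_min) ≥ 2 with φ(r) = αδr + βδ²r², λ_0 := max{1, γ/φ(d_max)}, ⌊λ_0⌋ < ⌊ρ_0⌋, and α_T/β_T > α/(βδ). Then the problem of maximizing E_T(N,d) = α_T Σ_{i=1}^N d_i + β_T Σ_{i=1}^N d_i² over N ∈ ℕ and d ∈ ℝ^N subject to αδ Σd_i + βδ² Σd_i² ≤ γ and d_min ≤ d_i ≤ d_max has the unique solution N̄ = ⌊ρ_0⌋ and d̄ = (d̄_0,...,d̄_0) with d̄_0 = (-αN̄ + √((αN̄)² + 4βN̄γ))/(2βδN̄). -/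

import Mathlib

set_option maxHeartbeats 1000000

-- monotonicity of r ↦ a r + b r²  on positives
lemma my_aux_mono (a b x y : ℝ) (ha : 0 < a) (hb : 0 < b) (hx : 0 < x) (hy : 0 < y)
    (h : a*x + b*x^2 ≤ a*y + b*y^2) : x ≤ y := by
  by_contra hc
  push_neg at hc
  linarith [mul_pos ha (sub_pos.mpr hc),
    mul_pos hb (mul_pos (show (0:ℝ) < x + y by linarith) (sub_pos.mpr hc))]

-- core monotonicity fact yielding S1 ≤ T
lemma my_aux_S1le (a b γ Nr NBr S1 T : ℝ) (ha : 0 < a) (hb : 0 < b)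
    (hNr : 0 < Nr) (hNN : Nr ≤ NBr) (hS1 : 0 < S1) (hT : 0 < T)
    (step1 : Nr*a*S1 + b*S1^2 ≤ Nr*γ)
    (hkeyN : NBr*γ = a*NBr*T + b*T^2) : S1 ≤ T := by
  by_contra hc
  push_neg at hc
  have step2 : NBr*(Nr*a*S1 + b*S1^2) ≤ NBr*(Nr*γ) :=
    mul_le_mul_of_nonneg_left step1 (le_of_lt (lt_of_lt_of_le hNr hNN))
  nlinarith [mul_pos (mul_pos hNr ha) (mul_pos (lt_of_lt_of_le hNr hNN) (sub_pos.mpr hc)),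
    mul_nonneg (le_of_lt hb) (mul_nonneg (sub_nonneg.mpr hNN) (sq_nonneg S1)),
    mul_pos (mul_pos hb hNr) (mul_pos (sub_pos.mpr hc) (by linarith : (0:ℝ) < S1 + T))]

theorem stmt9 (αT βT α β δ γ dmin dmax : ℝ)
    (hαT : 0 < αT) (hβT : 0 < βT) (hα : 0 < α) (hβ : 0 < β)
    (hδ : 0 < δ) (hδ1 : δ ≤ 1) (hγ : 0 < γ)
    (hmin : 0 < dmin) (hminmax : dmin < dmax)
    (φ : ℝ → ℝ) (hφ : φ = fun r => α * δ * r + β * δ^2 * r^2)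
    (ρ₀ lam₀ : ℝ) (hρ₀ : ρ₀ = γ / φ dmin) (hlam₀ : lam₀ = max 1 (γ / φ dmax))
    (hρ₀2 : 2 ≤ ρ₀) (hfl : ⌊lam₀⌋₊ < ⌊ρ₀⌋₊)
    (hω : αT / βT > α / (β * δ))
    (Nbar : ℕ) (hNbar : Nbar = ⌊ρ₀⌋₊)
    (d0 : ℝ)
    (hd0 : d0 = (-α * Nbar + Real.sqrt ((α * Nbar)^2 + 4 * β * Nbar * γ)) / (2 * β * δ * Nbar)) :
    (α * δ * (∑ _i : Fin Nbar, d0) + β * δ^2 * (∑ _i : Fin Nbar, d0^2) ≤ γ ∧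
      dmin ≤ d0 ∧ d0 ≤ dmax) ∧
    ∀ (N : ℕ) (d : Fin N → ℝ),
      (α * δ * (∑ i, d i) + β * δ^2 * (∑ i, (d i)^2) ≤ γ ∧
        ∀ i, dmin ≤ d i ∧ d i ≤ dmax) →
      (αT * (∑ i, d i) + βT * (∑ i, (d i)^2)
          ≤ αT * (∑ _i : Fin Nbar, d0) + βT * (∑ _i : Fin Nbar, d0^2)) ∧
      (αT * (∑ i, d i) + βT * (∑ i, (d i)^2)
          = αT * (∑ _i : Fin Nbar, d0) + βT * (∑ _i : Fin Nbar, d0^2) →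
        N = Nbar ∧ ∀ i, d i = d0) := by
  have hdmaxpos : 0 < dmax := lt_trans hmin hminmax
  have hφmin : (0:ℝ) < φ dmin := by rw [hφ]; dsimp; positivity
  have hφmax : (0:ℝ) < φ dmax := by rw [hφ]; dsimp; positivity
  have hρpos : (0:ℝ) < ρ₀ := by linarith
  have hN2 : 2 ≤ Nbar := by
    rw [hNbar]; exact Nat.le_floor (by exact_mod_cast hρ₀2)
  have hNr : (0:ℝ) < (Nbar:ℝ) := by exact_mod_cast Nat.lt_of_lt_of_le (by norm_num) hN2
  -- sqrt facts
  have hDnn : (0:ℝ) ≤ (α*Nbar)^2 + 4*β*Nbar*γ := by positivity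
  set D : ℝ := Real.sqrt ((α*Nbar)^2 + 4*β*Nbar*γ) with hDdef
  have hD2 : D^2 = (α*Nbar)^2 + 4*β*Nbar*γ := Real.sq_sqrt hDnn
  have hDnneg : 0 ≤ D := Real.sqrt_nonneg _
  have hDgt : α*(Nbar:ℝ) < D := by
    rw [hDdef]
    refine (Real.lt_sqrt (le_of_lt (mul_pos hα hNr))).mpr ?_
    have := mul_pos (mul_pos hβ hNr) hγ
    nlinarith [this]
  have hd0pos : 0 < d0 := by
    rw [hd0]
    exact div_pos (by linarith) (by positivity)
  have hd0e : 2*β*δ*(Nbar:ℝ)*d0 = -α*Nbar + D := by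
    rw [hd0]; field_simp
  -- key equation : N̄ φ(d0) = γ
  have hsq : (2*β*δ*(Nbar:ℝ)*d0 + α*Nbar)^2 = (α*Nbar)^2 + 4*β*Nbar*γ := by
    rw [show 2*β*δ*(Nbar:ℝ)*d0 + α*Nbar = D by linarith]; exact hD2
  have h4 : (4*β*(Nbar:ℝ)) * (α*δ*((Nbar:ℝ)*d0) + β*δ^2*((Nbar:ℝ)*d0^2) - γ) = 0 := by
    linear_combination hsq
  have hkey : α*δ*((Nbar:ℝ)*d0) + β*δ^2*((Nbar:ℝ)*d0^2) = γ := by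
    have h4b : (4*β*(Nbar:ℝ)) ≠ 0 := by positivity
    have h5 := (mul_eq_zero.mp h4).resolve_left h4b
    linarith [h5]
  -- bounds on d0
  have hNle : (Nbar:ℝ) ≤ ρ₀ := by rw [hNbar]; exact Nat.floor_le (le_of_lt hρpos)
  have hminφ : (Nbar:ℝ) * φ dmin ≤ γ := by
    rw [hρ₀] at hNle
    calc (Nbar:ℝ) * φ dmin ≤ (γ / φ dmin) * φ dmin :=
          mul_le_mul_of_nonneg_right hNle (le_of_lt hφmin)
      _ = γ := by field_simp
  have hdmin_le : dmin ≤ d0 := by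
    rw [hφ] at hminφ; dsimp at hminφ
    apply my_aux_mono (α*δ) (β*δ^2) dmin d0 (by positivity) (by positivity) hmin hd0pos
    have h1 : (Nbar:ℝ)*(α*δ*dmin + β*δ^2*dmin^2) ≤ (Nbar:ℝ)*(α*δ*d0 + β*δ^2*d0^2) := by
      linarith [hkey]
    have := (mul_le_mul_iff_right₀ hNr).mp h1
    linarith
  have hNgt : lam₀ < (Nbar:ℝ) := by
    have h1 : lam₀ < (⌊lam₀⌋₊ : ℝ) + 1 := Nat.lt_floor_add_one lam₀
    have h2 : (⌊lam₀⌋₊ : ℝ) + 1 ≤ (Nbar:ℝ) := by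
      rw [hNbar]; exact_mod_cast Nat.succ_le_of_lt hfl
    linarith
  have hmaxφ : γ < (Nbar:ℝ) * φ dmax := by
    have h1 : γ / φ dmax ≤ lam₀ := by rw [hlam₀]; exact le_max_right _ _
    have h2 : γ / φ dmax < (Nbar:ℝ) := lt_of_le_of_lt h1 hNgt
    calc γ = (γ / φ dmax) * φ dmax := by field_simp
      _ < (Nbar:ℝ) * φ dmax := mul_lt_mul_of_pos_right h2 hφmax
  have hdmax_le : d0 ≤ dmax := by
    rw [hφ] at hmaxφ; dsimp at hmaxφ
    apply my_aux_mono (α*δ) (β*δ^2) d0 dmax (by positivity) (by positivity) hd0pos hdmaxpos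
    have h1 : (Nbar:ℝ)*(α*δ*d0 + β*δ^2*d0^2) ≤ (Nbar:ℝ)*(α*δ*dmax + β*δ^2*dmax^2) := by
      linarith [hkey]
    have := (mul_le_mul_iff_right₀ hNr).mp h1
    linarith
  -- candidate sums
  have hsum1 : (∑ _i : Fin Nbar, d0) = (Nbar:ℝ) * d0 := by
    simp [Finset.sum_const, Finset.card_univ, nsmul_eq_mul]
  have hsum2 : (∑ _i : Fin Nbar, d0^2) = (Nbar:ℝ) * d0^2 := by
    simp [Finset.sum_const, Finset.card_univ, nsmul_eq_mul]
  have hc' : α*βT < αT*(β*δ) := by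
    rw [gt_iff_lt, div_lt_div_iff₀ (mul_pos hβ hδ) hβT] at hω
    linarith
  refine ⟨⟨by rw [hsum1, hsum2]; linarith [hkey], hdmin_le, hdmax_le⟩, ?_⟩
  intro N d ⟨hcon, hbd⟩
  rw [hsum1, hsum2]
  set S1 : ℝ := ∑ i, d i with hS1
  set S2 : ℝ := ∑ i, (d i)^2 with hS2
  rcases Nat.eq_zero_or_pos N with hN0 | hNpos
  · subst hN0
    have e1 : S1 = 0 := by simp [hS1]
    have e2 : S2 = 0 := by simp [hS2]
    have hpos : 0 < αT*((Nbar:ℝ)*d0) + βT*((Nbar:ℝ)*d0^2) := by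
      have h1 := mul_pos hαT (mul_pos hNr hd0pos)
      have h2 := mul_pos hβT (mul_pos hNr (pow_pos hd0pos 2))
      linarith
    constructor
    · rw [e1, e2]; linarith
    · intro heq; rw [e1, e2] at heq; exfalso; linarith
  have hNrpos : (0:ℝ) < (N:ℝ) := by exact_mod_cast hNpos
  -- per-coordinate bounds
  have hS1lb : (N:ℝ) * dmin ≤ S1 := by
    rw [hS1]
    calc (N:ℝ) * dmin = ∑ _i : Fin N, dmin := by
          simp [Finset.sum_const, Finset.card_univ, nsmul_eq_mul]
      _ ≤ ∑ i, d i := Finset.sum_le_sum (fun i _ => (hbd i).1)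
  have hS1pos : 0 < S1 := lt_of_lt_of_le (mul_pos hNrpos hmin) hS1lb
  -- N ≤ Nbar
  have hφconstr : (N:ℝ) * (α*δ*dmin + β*δ^2*dmin^2) ≤ γ := by
    have h1 : ∀ i : Fin N, α*δ*dmin + β*δ^2*dmin^2 ≤ α*δ*(d i) + β*δ^2*(d i)^2 := by
      intro i
      have hi := (hbd i).1
      have hdi : 0 < d i := lt_of_lt_of_le hmin hi
      linarith [mul_le_mul_of_nonneg_left hi (le_of_lt (mul_pos hα hδ)),
        mul_le_mul_of_nonneg_left (mul_self_le_mul_self (le_of_lt hmin) hi)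
          (le_of_lt (mul_pos hβ (mul_pos hδ hδ)))]
    have h2 : (N:ℝ) * (α*δ*dmin + β*δ^2*dmin^2) ≤ ∑ i, (α*δ*(d i) + β*δ^2*(d i)^2) := by
      calc (N:ℝ) * (α*δ*dmin + β*δ^2*dmin^2) = ∑ _i : Fin N, (α*δ*dmin + β*δ^2*dmin^2) := by
            simp [Finset.sum_const, Finset.card_univ, nsmul_eq_mul]; ring
        _ ≤ _ := Finset.sum_le_sum (fun i _ => h1 i)
    have h3 : ∑ i, (α*δ*(d i) + β*δ^2*(d i)^2) = α*δ*S1 + β*δ^2*S2 := by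
      rw [hS1, hS2, Finset.sum_add_distrib, ← Finset.mul_sum, ← Finset.mul_sum]
    rw [h3] at h2
    linarith
  have hNleNbar : N ≤ Nbar := by
    rw [hNbar]
    apply Nat.le_floor
    rw [hρ₀, le_div_iff₀ hφmin, hφ]
    dsimp
    linarith [hφconstr]
  have hNleNr : (N:ℝ) ≤ (Nbar:ℝ) := by exact_mod_cast hNleNbar
  -- Cauchy-Schwarz identity
  have hid : ∑ i, ((N:ℝ)*d i - S1)^2 = (N:ℝ)^2*S2 - (N:ℝ)*S1^2 := by
    have e : ∀ i ∈ Finset.univ, ((N:ℝ)*d i - S1)^2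
        = (N:ℝ)^2*(d i)^2 - (2*(N:ℝ)*S1)*(d i) + S1^2 := fun i _ => by ring
    rw [Finset.sum_congr rfl e, Finset.sum_add_distrib, Finset.sum_sub_distrib,
      ← Finset.mul_sum, ← Finset.mul_sum, Finset.sum_const, Finset.card_univ,
      Fintype.card_fin, nsmul_eq_mul, ← hS1, ← hS2]
    ring
  have hCS : S1^2 ≤ (N:ℝ) * S2 := by
    have h0 : 0 ≤ ∑ i, ((N:ℝ)*d i - S1)^2 := Finset.sum_nonneg (fun i _ => sq_nonneg _)
    rw [hid] at h0
    by_contra hlt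
    push_neg at hlt
    have := mul_pos hNrpos (sub_pos.mpr hlt)
    linarith [this, h0]
  -- S1 ≤ Nbar * d0
  have step1 : (N:ℝ)*(α*δ)*S1 + β*δ^2*S1^2 ≤ (N:ℝ)*γ := by
    have h1 : (N:ℝ)*(α*δ*S1 + β*δ^2*S2) ≤ (N:ℝ)*γ :=
      mul_le_mul_of_nonneg_left hcon (le_of_lt hNrpos)
    have h2 := mul_le_mul_of_nonneg_left hCS (le_of_lt (mul_pos hβ (mul_pos hδ hδ)))
    linarith [h1, h2]
  have hkeyN : (Nbar:ℝ)*γ = (α*δ)*(Nbar:ℝ)*((Nbar:ℝ)*d0) + (β*δ^2)*((Nbar:ℝ)*d0)^2 := by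
    linear_combination (Nbar:ℝ) * hkey.symm
  have hS1le : S1 ≤ (Nbar:ℝ) * d0 :=
    my_aux_S1le (α*δ) (β*δ^2) γ (N:ℝ) (Nbar:ℝ) S1 ((Nbar:ℝ)*d0)
      (by positivity) (by positivity) hNrpos hNleNr hS1pos (mul_pos hNr hd0pos)
      (by linarith [step1]) hkeyN
  -- objective inequality
  have hb1 : βT*(α*δ*S1 + β*δ^2*S2) ≤ βT*γ := mul_le_mul_of_nonneg_left hcon (le_of_lt hβT)
  have hcpos : 0 < δ*(αT*(β*δ) - α*βT) := by
    have : 0 < αT*(β*δ) - α*βT := by linarith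
    positivity
  have hb2 : (δ*(αT*(β*δ) - α*βT))*S1 ≤ (δ*(αT*(β*δ) - α*βT))*((Nbar:ℝ)*d0) :=
    mul_le_mul_of_nonneg_left hS1le (le_of_lt hcpos)
  have hβδ2 : (0:ℝ) < β*δ^2 := by positivity
  have hb3 : βT*(α*δ*((Nbar:ℝ)*d0) + β*δ^2*((Nbar:ℝ)*d0^2)) = βT*γ := by rw [hkey]
  have hmul : β*δ^2*(αT*S1+βT*S2) ≤ β*δ^2*(αT*((Nbar:ℝ)*d0)+βT*((Nbar:ℝ)*d0^2)) := by
    linarith [hb1, hb2, hb3]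
  constructor
  · exact le_of_mul_le_mul_left hmul hβδ2
  · intro heq
    have e0 : βT*(γ - (α*δ*S1+β*δ^2*S2)) + (δ*(αT*(β*δ) - α*βT))*((Nbar:ℝ)*d0 - S1) = 0 := by
      linear_combination (-(β*δ^2)) * heq - βT * hkey
    have t1 : 0 ≤ βT*(γ - (α*δ*S1+β*δ^2*S2)) :=
      mul_nonneg (le_of_lt hβT) (by linarith)
    have t2 : 0 ≤ (δ*(αT*(β*δ) - α*βT))*((Nbar:ℝ)*d0 - S1) :=
      mul_nonneg (le_of_lt hcpos) (by linarith)
    have hS1eq : S1 = (Nbar:ℝ)*d0 := by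
      have h1 : (δ*(αT*(β*δ) - α*βT))*((Nbar:ℝ)*d0 - S1) = 0 := by linarith
      rcases mul_eq_zero.mp h1 with h | h
      · exact absurd h (ne_of_gt hcpos)
      · linarith
    have hGeq : α*δ*((Nbar:ℝ)*d0)+β*δ^2*S2 = γ := by
      have h1 : βT*(γ - (α*δ*((Nbar:ℝ)*d0)+β*δ^2*S2)) = 0 := by
        rw [hS1eq] at e0
        linarith [e0]
      rcases mul_eq_zero.mp h1 with h | h
      · exact absurd h (ne_of_gt hβT)
      · linarith
    have hS2eq : S2 = (Nbar:ℝ)*d0^2 := by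
      have h1 : β*δ^2*S2 = β*δ^2*((Nbar:ℝ)*d0^2) := by
        linarith [hkey, hGeq]
      exact mul_left_cancel₀ (ne_of_gt hβδ2) h1
    have hNgeNr : (Nbar:ℝ) ≤ (N:ℝ) := by
      rw [hS1eq, hS2eq] at hCS
      by_contra hlt
      push_neg at hlt
      have h1 : 0 < ((Nbar:ℝ) - (N:ℝ)) * ((Nbar:ℝ) * d0^2) :=
        mul_pos (sub_pos.mpr hlt) (mul_pos hNr (pow_pos hd0pos 2))
      linarith [hCS, h1]
    have hNeq : N = Nbar := le_antisymm hNleNbar (by exact_mod_cast hNgeNr)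
    refine ⟨hNeq, ?_⟩
    have hNNr : (N:ℝ) = (Nbar:ℝ) := by exact_mod_cast hNeq
    have hzero : ∑ i, ((N:ℝ)*d i - S1)^2 = 0 := by
      rw [hid, hS1eq, hS2eq, hNNr]
      ring
    intro i
    have hterm := (Finset.sum_eq_zero_iff_of_nonneg
      (fun i _ => sq_nonneg ((N:ℝ)*d i - S1))).mp hzero i (Finset.mem_univ i)
    have h6 : (N:ℝ)*d i - S1 = 0 := by
      have := sq_eq_zero_iff.mp hterm
      exact this
    have h7 : (N:ℝ)*d i = (N:ℝ)*d0 := by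
      rw [hS1eq, hNNr] at *
      linarith [h6]
    exact mul_left_cancel₀ (ne_of_gt hNrpos) h7
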